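/- Let 1 < α ≤ β < 2 and consider the threat point (−(2−β), −(2−β)). Along the line v = −(2/(α+β−2))u + (2−α)(α+β)/(α+β−2) for u ∈ [2−α, β], the Nash product (u + 2 − β)(v + 2 − β) attains its maximum at u = 2−α, with maximal value (4−α−β)². -/

import Mathlib

theorem nash_product_P2_case1 (α β : ℝ) (hα : 1 < α) (hαβ : α ≤ β) (hβ : β < 2) :
    let v : ℝ → ℝ := fun u =>
      -(2 / (α + β - 2)) * u + (2 - α) * (α + β) / (α + β - 2)
    let g : ℝ → ℝ := fun u => (u + 2 - β) * (v u + 2 - β)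
    (∀ u ∈ Set.Icc (2 - α) β, g u ≤ g (2 - α)) ∧ g (2 - α) = (4 - α - β) ^ 2 := by
  intro v g
  have hs : α + β - 2 > 0 := by linarith
  have hs' : α + β - 2 ≠ 0 := ne_of_gt hs
  constructor
  · rintro u ⟨h1, h2⟩
    simp only [g, v]
    rw [← mul_le_mul_iff_of_pos_right hs]
    have key : (2 - α + 2 - β) * (-(2 / (α + β - 2)) * (2 - α) + (2 - α) * (α + β) / (α + β - 2) + 2 - β) * (α + β - 2)
        - (u + 2 - β) * (-(2 / (α + β - 2)) * u + (2 - α) * (α + β) / (α + β - 2) + 2 - β) * (α + β - 2)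
        = 2 * (u - (2 - α)) * (u - (6 * α + 8 * β - 12 - (α + β) ^ 2) / 2) := by
      field_simp
      ring
    have hr : (6 * α + 8 * β - 12 - (α + β) ^ 2) / 2 ≤ 2 - α := by
      nlinarith [sq_nonneg (α + β - 4)]
    nlinarith [mul_nonneg (sub_nonneg.2 h1) (sub_nonneg.2 (hr.trans h1))]
  · simp only [g, v]
    field_simp
    ring
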